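/- Fix a real number q > 1 and denote by (α_i) the quasi-greedy expansion of 1 in base q with unbounded digits. The map x ↦ (b_i), where (b_i) denotes the greedy expansion of x, is a strictly increasing one-to-one correspondence between the interval [0, ∞) and the set of all sequences (b_i) of nonnegative integers satisfying b_{n+1}b_{n+2}... < α_1α_2... (strict lexicographic inequality) for all n ≥ 1. -/

import Mathlib

/-- Strict lexicographic order on digit sequences (indexed from 0). -/
def LexLt (a b : ℕ → ℕ) : Prop :=
  ∃ n, (∀ k, k < n → a k = b k) ∧ a n < b n

/-- Non-strict lexicographic order on digit sequences. -/
def LexLe (a b : ℕ → ℕ) : Prop :=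
  LexLt a b ∨ a = b

/-- The next quasi-greedy digit with unbounded digits: the largest nonnegative integer `m`
with `s + m / q ^ (n+1) < x`, where `s` is the value of the previously chosen digits. -/
noncomputable def qgDigitU (q x s : ℝ) (n : ℕ) : ℕ :=
  sSup {m : ℕ | s + (m : ℝ) / q ^ (n + 1) < x}

/-- Partial sums of the quasi-greedy expansion of `x` in base `q` with unbounded digits. -/
noncomputable def qgSumU (q x : ℝ) : ℕ → ℝ
  | 0 => 0
  | n + 1 => qgSumU q x n + (qgDigitU q x (qgSumU q x n) n : ℝ) / q ^ (n + 1)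

/-- `quasiGreedyU q x n` is the `(n+1)`-st digit (indexing from 0) of the quasi-greedy
expansion of `x` in base `q` with unbounded digits: recursively, it is the largest
nonnegative integer `a_n` with `a_1/q + ⋯ + a_n/q^n < x`. -/
noncomputable def quasiGreedyU (q x : ℝ) (n : ℕ) : ℕ :=
  qgDigitU q x (qgSumU q x n) n

/-- The next greedy digit with unbounded digits: the largest nonnegative integer `m`
with `s + m / q ^ (n+1) ≤ x`, where `s` is the value of the previously chosen digits. -/
noncomputable def gDigitU (q x s : ℝ) (n : ℕ) : ℕ :=
  sSup {m : ℕ | s + (m : ℝ) / q ^ (n + 1) ≤ x}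

/-- Partial sums of the greedy expansion of `x` in base `q` with unbounded digits. -/
noncomputable def gSumU (q x : ℝ) : ℕ → ℝ
  | 0 => 0
  | n + 1 => gSumU q x n + (gDigitU q x (gSumU q x n) n : ℝ) / q ^ (n + 1)

/-- `greedyU q x n` is the `(n+1)`-st digit (indexing from 0) of the greedy expansion
of `x` in base `q` with unbounded digits: recursively, it is the largest nonnegative
integer `b_n` with `b_1/q + ⋯ + b_n/q^n ≤ x`. -/
noncomputable def greedyU (q x : ℝ) (n : ℕ) : ℕ :=
  gDigitU q x (gSumU q x n) n

lemma gDigitU_spec {q x s : ℝ} (hq : 1 < q) (hs : s ≤ x) (n : ℕ) :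
    s + (gDigitU q x s n : ℝ) / q ^ (n+1) ≤ x ∧
      x < s + ((gDigitU q x s n : ℝ) + 1) / q ^ (n+1) := by
  have hp : (0:ℝ) < q ^ (n+1) := pow_pos (by linarith) _
  set S := {m : ℕ | s + (m : ℝ) / q ^ (n + 1) ≤ x} with hS
  have hmemiff : ∀ m : ℕ, m ∈ S ↔ (m:ℝ) ≤ (x - s) * q ^ (n+1) := by
    intro m
    rw [hS, Set.mem_setOf_eq, ← div_le_iff₀ hp]
    constructor <;> intro h <;> linarith
  have hne : S.Nonempty := ⟨0, by simp [hS]; linarith⟩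
  have hbdd : BddAbove S := by
    refine ⟨⌈(x - s) * q ^ (n+1)⌉₊, fun m hm => ?_⟩
    have h1 := (hmemiff m).1 hm
    exact_mod_cast h1.trans (Nat.le_ceil _)
  have hmem : gDigitU q x s n ∈ S := Nat.sSup_mem hne hbdd
  refine ⟨hmem, ?_⟩
  by_contra h
  push_neg at h
  have : gDigitU q x s n + 1 ∈ S := by
    rw [hS, Set.mem_setOf_eq]; push_cast; linarith
  have := le_csSup hbdd this
  simp [gDigitU, ← hS] at this

lemma qgDigitU_spec {q x s : ℝ} (hq : 1 < q) (hs : s < x) (n : ℕ) :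
    s + (qgDigitU q x s n : ℝ) / q ^ (n+1) < x ∧
      x ≤ s + ((qgDigitU q x s n : ℝ) + 1) / q ^ (n+1) := by
  have hp : (0:ℝ) < q ^ (n+1) := pow_pos (by linarith) _
  set S := {m : ℕ | s + (m : ℝ) / q ^ (n + 1) < x} with hS
  have hmemiff : ∀ m : ℕ, m ∈ S ↔ (m:ℝ) < (x - s) * q ^ (n+1) := by
    intro m
    rw [hS, Set.mem_setOf_eq, ← div_lt_iff₀ hp]
    constructor <;> intro h <;> linarith
  have hne : S.Nonempty := ⟨0, by simp [hS]; linarith⟩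
  have hbdd : BddAbove S := by
    refine ⟨⌈(x - s) * q ^ (n+1)⌉₊, fun m hm => ?_⟩
    have h1 := ((hmemiff m).1 hm).le
    exact_mod_cast h1.trans (Nat.le_ceil _)
  have hmem : qgDigitU q x s n ∈ S := Nat.sSup_mem hne hbdd
  refine ⟨hmem, ?_⟩
  by_contra h
  push_neg at h
  have : qgDigitU q x s n + 1 ∈ S := by
    rw [hS, Set.mem_setOf_eq]; push_cast; linarith
  have := le_csSup hbdd this
  simp [qgDigitU, ← hS] at this

lemma gSumU_le {q x : ℝ} (hq : 1 < q) (hx : 0 ≤ x) : ∀ n, gSumU q x n ≤ x := by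
  intro n
  induction n with
  | zero => simpa [gSumU]
  | succ n ih => exact (gDigitU_spec hq ih n).1

lemma lt_gSumU_succ {q x : ℝ} (hq : 1 < q) (hx : 0 ≤ x) (n : ℕ) :
    x < gSumU q x (n+1) + 1 / q ^ (n+1) := by
  have h := (gDigitU_spec hq (gSumU_le hq hx n) n).2
  show x < gSumU q x n + _ + 1 / q ^ (n+1)
  have hp : (0:ℝ) < q ^ (n+1) := pow_pos (by linarith) _
  rw [add_div] at h
  simpa [add_assoc] using h

lemma qgSumU_lt {q x : ℝ} (hq : 1 < q) (hx : 0 < x) : ∀ n, qgSumU q x n < x := by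
  intro n
  induction n with
  | zero => simpa [qgSumU]
  | succ n ih => exact (qgDigitU_spec hq ih n).1

lemma le_qgSumU_succ {q x : ℝ} (hq : 1 < q) (hx : 0 < x) (n : ℕ) :
    x ≤ qgSumU q x (n+1) + 1 / q ^ (n+1) := by
  have h := (qgDigitU_spec hq (qgSumU_lt hq hx n) n).2
  show x ≤ qgSumU q x n + _ + 1 / q ^ (n+1)
  rw [add_div] at h
  simpa [add_assoc] using h

lemma gSumU_eq_sum (q x : ℝ) (n : ℕ) :
    gSumU q x n = ∑ i ∈ Finset.range n, (greedyU q x i : ℝ) / q ^ (i+1) := by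
  induction n with
  | zero => simp [gSumU]
  | succ n ih => rw [Finset.sum_range_succ, ← ih]; rfl

lemma qgSumU_eq_sum (q x : ℝ) (n : ℕ) :
    qgSumU q x n = ∑ i ∈ Finset.range n, (quasiGreedyU q x i : ℝ) / q ^ (i+1) := by
  induction n with
  | zero => simp [qgSumU]
  | succ n ih => rw [Finset.sum_range_succ, ← ih]; rfl

lemma tendsto_gSumU {q x : ℝ} (hq : 1 < q) (hx : 0 ≤ x) :
    Filter.Tendsto (gSumU q x) Filter.atTop (nhds x) := by
  have hq0 : (0:ℝ) < q := by linarith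
  have hlim : Filter.Tendsto (fun n : ℕ => x - gSumU q x n) Filter.atTop (nhds 0) := by
    apply squeeze_zero (g := fun n => (x+1) * (1/q)^n)
    · intro n; have := gSumU_le hq hx n; linarith
    · intro n
      cases n with
      | zero => simp [gSumU]
      | succ n =>
        have h := lt_gSumU_succ hq hx n
        have h2 : (1/q) ^ (n+1) = 1 / q ^ (n+1) := by
          rw [div_pow, one_pow]
        have h3 : (0:ℝ) < (1/q)^(n+1) := pow_pos (by positivity) _
        nlinarith [h3]
    · simpa using (tendsto_pow_atTop_nhds_zero_of_lt_one (r := 1/q) (by positivity)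
        (by rw [div_lt_one hq0]; linarith)).const_mul (x+1)
  have := Filter.Tendsto.sub
    (tendsto_const_nhds : Filter.Tendsto (fun _ : ℕ => x) Filter.atTop (nhds x)) hlim
  simpa using this

lemma tendsto_qgSumU {q : ℝ} (hq : 1 < q) :
    Filter.Tendsto (qgSumU q 1) Filter.atTop (nhds 1) := by
  have hq0 : (0:ℝ) < q := by linarith
  have hlim : Filter.Tendsto (fun n : ℕ => 1 - qgSumU q 1 n) Filter.atTop (nhds 0) := by
    apply squeeze_zero (g := fun n => 2 * (1/q)^n)
    · intro n; have := qgSumU_lt hq (by norm_num : (0:ℝ) < 1) n; linarith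
    · intro n
      cases n with
      | zero => simp [qgSumU]
      | succ n =>
        have h := le_qgSumU_succ hq (by norm_num : (0:ℝ) < 1) n
        have h2 : (1/q) ^ (n+1) = 1 / q ^ (n+1) := by
          rw [div_pow, one_pow]
        have h3 : (0:ℝ) < (1/q)^(n+1) := pow_pos (by positivity) _
        nlinarith [h3]
    · simpa using (tendsto_pow_atTop_nhds_zero_of_lt_one (r := 1/q) (by positivity)
        (by rw [div_lt_one hq0]; linarith)).const_mul 2
  have := Filter.Tendsto.sub
    (tendsto_const_nhds : Filter.Tendsto (fun _ : ℕ => (1:ℝ)) Filter.atTop (nhds 1)) hlim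
  simpa using this

lemma hasSum_greedyU {q x : ℝ} (hq : 1 < q) (hx : 0 ≤ x) :
    HasSum (fun i => (greedyU q x i : ℝ) / q ^ (i+1)) x := by
  have hq0 : (0:ℝ) < q := by linarith
  have hnn : ∀ i, (0:ℝ) ≤ (greedyU q x i : ℝ) / q ^ (i+1) := by
    intro i; positivity
  have hbd : ∀ n, ∑ i ∈ Finset.range n, (greedyU q x i : ℝ) / q ^ (i+1) ≤ x := by
    intro n; rw [← gSumU_eq_sum]; exact gSumU_le hq hx n
  have hs : Summable (fun i => (greedyU q x i : ℝ) / q ^ (i+1)) :=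
    summable_of_sum_range_le hnn hbd
  have h1 := hs.hasSum.tendsto_sum_nat
  have h2 : Filter.Tendsto (fun n => ∑ i ∈ Finset.range n, (greedyU q x i : ℝ) / q ^ (i+1))
      Filter.atTop (nhds x) := by
    have hfe : (fun n => ∑ i ∈ Finset.range n, (greedyU q x i : ℝ) / q ^ (i+1)) = gSumU q x :=
      funext fun n => (gSumU_eq_sum q x n).symm
    rw [hfe]; exact tendsto_gSumU hq hx
  have heq := tendsto_nhds_unique h1 h2
  have h3 := hs.hasSum
  rwa [heq] at h3

lemma hasSum_quasiGreedyU {q : ℝ} (hq : 1 < q) :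
    HasSum (fun i => (quasiGreedyU q 1 i : ℝ) / q ^ (i+1)) 1 := by
  have hq0 : (0:ℝ) < q := by linarith
  have hnn : ∀ i, (0:ℝ) ≤ (quasiGreedyU q 1 i : ℝ) / q ^ (i+1) := by
    intro i; positivity
  have hbd : ∀ n, ∑ i ∈ Finset.range n, (quasiGreedyU q 1 i : ℝ) / q ^ (i+1) ≤ 1 := by
    intro n; rw [← qgSumU_eq_sum]; exact (qgSumU_lt hq one_pos n).le
  have hs : Summable (fun i => (quasiGreedyU q 1 i : ℝ) / q ^ (i+1)) :=
    summable_of_sum_range_le hnn hbd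
  have h1 := hs.hasSum.tendsto_sum_nat
  have h2 : Filter.Tendsto (fun n => ∑ i ∈ Finset.range n, (quasiGreedyU q 1 i : ℝ) / q ^ (i+1))
      Filter.atTop (nhds 1) := by
    have hfe : (fun n => ∑ i ∈ Finset.range n, (quasiGreedyU q 1 i : ℝ) / q ^ (i+1)) = qgSumU q 1 :=
      funext fun n => (qgSumU_eq_sum q 1 n).symm
    rw [hfe]; exact tendsto_qgSumU hq
  have heq := tendsto_nhds_unique h1 h2
  have h3 := hs.hasSum
  rwa [heq] at h3

/-- If greedy expansion of `y ∈ [0,1)`, then it is lexicographically less than the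
quasi-greedy expansion of 1. -/
lemma greedyU_lexLt_alpha {q y : ℝ} (hq : 1 < q) (hy0 : 0 ≤ y) (hy1 : y < 1) :
    LexLt (greedyU q y) (quasiGreedyU q 1) := by
  have hexists : ∃ n, greedyU q y n ≠ quasiGreedyU q 1 n := by
    by_contra h
    push_neg at h
    have : y = 1 := by
      have h1 := hasSum_greedyU hq hy0
      have h2 := hasSum_quasiGreedyU hq
      have : (fun i => (greedyU q y i : ℝ) / q ^ (i+1)) =
          (fun i => (quasiGreedyU q 1 i : ℝ) / q ^ (i+1)) := by
        funext i; rw [h i]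
      rw [this] at h1
      exact h1.unique h2
    linarith
  classical
  set n := Nat.find hexists with hn
  have hne : greedyU q y n ≠ quasiGreedyU q 1 n := Nat.find_spec hexists
  have hagree : ∀ k, k < n → greedyU q y k = quasiGreedyU q 1 k := by
    intro k hk
    by_contra hc
    exact absurd (Nat.find_le hc : n ≤ k) (by omega)
  have hsumeq : gSumU q y n = qgSumU q 1 n := by
    rw [gSumU_eq_sum, qgSumU_eq_sum]
    exact Finset.sum_congr rfl fun i hi => by
      rw [hagree i (Finset.mem_range.mp hi)]
  refine ⟨n, hagree, ?_⟩
  by_contra hge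
  push_neg at hge
  have hgt : quasiGreedyU q 1 n < greedyU q y n := lt_of_le_of_ne hge (Ne.symm hne)
  have hp : (0:ℝ) < q ^ (n+1) := pow_pos (by linarith) _
  have h1 : gSumU q y (n+1) ≤ y := gSumU_le hq hy0 (n+1)
  have h2 : (1:ℝ) ≤ qgSumU q 1 (n+1) + 1 / q ^ (n+1) := le_qgSumU_succ hq one_pos n
  have h3 : gSumU q y (n+1) = gSumU q y n + (greedyU q y n : ℝ) / q ^ (n+1) := rfl
  have h4 : qgSumU q 1 (n+1) = qgSumU q 1 n + (quasiGreedyU q 1 n : ℝ) / q ^ (n+1) := rfl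
  have h5 : ((quasiGreedyU q 1 n : ℝ) + 1) / q ^ (n+1) ≤ (greedyU q y n : ℝ) / q ^ (n+1) := by
    gcongr
    exact_mod_cast hgt
  have h6 : ((quasiGreedyU q 1 n : ℝ) + 1) / q ^ (n+1)
      = (quasiGreedyU q 1 n : ℝ) / q ^ (n+1) + 1 / q ^ (n+1) := add_div _ _ _
  linarith

lemma greedyU_shift {q x : ℝ} (hq : 1 < q) (n : ℕ) :
    ∀ i : ℕ, gSumU q (q^(n+1) * (x - gSumU q x (n+1))) i
        = q^(n+1) * (gSumU q x (n+1+i) - gSumU q x (n+1)) ∧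
      greedyU q (q^(n+1) * (x - gSumU q x (n+1))) i = greedyU q x (n+1+i) := by
  have hA : (0:ℝ) < q^(n+1) := pow_pos (by linarith) _
  set G := gSumU q x (n+1) with hG
  set y := q^(n+1) * (x - G) with hy
  have key : ∀ (s s' : ℝ) (i : ℕ), s' = q^(n+1) * (s - G) →
      gDigitU q y s' i = gDigitU q x s (n+1+i) := by
    intro s s' i hs'
    unfold gDigitU
    congr 1
    ext m
    simp only [Set.mem_setOf_eq]
    have hpow : q ^ ((n+1+i)+1) = q^(n+1) * q^(i+1) := by
      rw [show (n+1+i)+1 = (n+1)+(i+1) from by omega, pow_add]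
    have hdd : (m:ℝ) / (q^(n+1) * q^(i+1)) = ((m:ℝ)/q^(i+1)) / q^(n+1) := by
      rw [div_div, mul_comm]
    rw [hpow, hdd, hs', hy]
    have e1 : q^(n+1)*(s - G) = q^(n+1)*s - q^(n+1)*G := by ring
    have e2 : q^(n+1)*(x - G) = q^(n+1)*x - q^(n+1)*G := by ring
    constructor
    · intro h
      have h3 : ((m:ℝ)/q^(i+1))/q^(n+1) ≤ x - s := by
        rw [div_le_iff₀ hA]
        nlinarith [e1, e2]
      linarith
    · intro h
      have h4 : q^(n+1)*(s + ((m:ℝ)/q^(i+1))/q^(n+1)) ≤ q^(n+1)*x :=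
        mul_le_mul_of_nonneg_left h hA.le
      have h5 : q^(n+1)*(s + ((m:ℝ)/q^(i+1))/q^(n+1)) = q^(n+1)*s + (m:ℝ)/q^(i+1) := by
        field_simp
      nlinarith [h4, h5]
  intro i
  induction i with
  | zero =>
    have h0 : gSumU q y 0 = q^(n+1) * (gSumU q x (n+1) - G) := by
      show (0:ℝ) = q^(n+1) * (gSumU q x (n+1) - G)
      rw [← hG]; ring
    exact ⟨by simpa using h0, key (gSumU q x (n+1)) (gSumU q y 0) 0 h0⟩
  | succ i ih =>
    have hb : greedyU q y i = greedyU q x (n+1+i) := ih.2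
    have hpow : q ^ ((n+1+i)+1) = q^(n+1) * q^(i+1) := by
      rw [show (n+1+i)+1 = (n+1)+(i+1) from by omega, pow_add]
    have hsum : gSumU q y (i+1) = q^(n+1) * (gSumU q x (n+1+(i+1)) - G) := by
      show gSumU q y i + (greedyU q y i : ℝ)/q^(i+1)
          = q^(n+1) * (gSumU q x (n+1+i) + (greedyU q x (n+1+i):ℝ)/q^((n+1+i)+1) - G)
      rw [ih.1, hb, hpow]
      have hq1 : q^(n+1) ≠ 0 := hA.ne'
      have hq2 : q^(i+1) ≠ 0 := (pow_pos (by linarith : (0:ℝ) < q) _).ne'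
      field_simp
      ring
    exact ⟨hsum, key (gSumU q x (n+1+(i+1))) (gSumU q y (i+1)) (i+1) hsum⟩

lemma greedyU_strictMono {q x x' : ℝ} (hq : 1 < q) (hx : 0 ≤ x) (hxx : x < x') :
    LexLt (greedyU q x) (greedyU q x') := by
  have hx' : 0 ≤ x' := le_trans hx hxx.le
  have hexists : ∃ n, greedyU q x n ≠ greedyU q x' n := by
    by_contra h; push_neg at h
    have h1 := hasSum_greedyU hq hx
    have h2 := hasSum_greedyU hq hx'
    have he : (fun i => (greedyU q x i:ℝ)/q^(i+1)) = fun i => (greedyU q x' i:ℝ)/q^(i+1) :=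
      funext fun i => by rw [h i]
    rw [he] at h1
    exact absurd (h1.unique h2) (by linarith)
  classical
  set n := Nat.find hexists with hn
  have hne : greedyU q x n ≠ greedyU q x' n := Nat.find_spec hexists
  have hagree : ∀ k, k < n → greedyU q x k = greedyU q x' k := fun k hk => by
    by_contra hc; exact absurd (Nat.find_le hc : n ≤ k) (by omega)
  have hsumeq : gSumU q x n = gSumU q x' n := by
    rw [gSumU_eq_sum, gSumU_eq_sum]
    exact Finset.sum_congr rfl fun i hi => by rw [hagree i (Finset.mem_range.mp hi)]
  refine ⟨n, hagree, ?_⟩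
  by_contra hge; push_neg at hge
  have hgt : greedyU q x' n < greedyU q x n := lt_of_le_of_ne hge (Ne.symm hne)
  have hp : (0:ℝ) < q ^ (n+1) := pow_pos (by linarith) _
  have h1 : gSumU q x (n+1) ≤ x := gSumU_le hq hx (n+1)
  have h2 : x' < gSumU q x' n + ((greedyU q x' n : ℝ)+1)/q^(n+1) :=
    (gDigitU_spec hq (gSumU_le hq hx' n) n).2
  have h3 : gSumU q x (n+1) = gSumU q x n + (greedyU q x n:ℝ)/q^(n+1) := rfl
  have h5 : ((greedyU q x' n:ℝ)+1)/q^(n+1) ≤ (greedyU q x n:ℝ)/q^(n+1) := by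
    gcongr
    exact_mod_cast hgt
  linarith

lemma qgSumU_mono {q : ℝ} (hq : 1 < q) : Monotone (qgSumU q 1) := by
  apply monotone_nat_of_le_succ
  intro n
  have hp : (0:ℝ) < q^(n+1) := pow_pos (by linarith) _
  have hnn : (0:ℝ) ≤ (quasiGreedyU q 1 n : ℝ)/q^(n+1) := by positivity
  have e : qgSumU q 1 (n+1) = qgSumU q 1 n + (quasiGreedyU q 1 n:ℝ)/q^(n+1) := rfl
  rw [e]; linarith

lemma greedyU_surj {q : ℝ} (hq : 1 < q) (b : ℕ → ℕ)
    (hb : ∀ n, LexLt (fun i => b (n + 1 + i)) (quasiGreedyU q 1)) :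
    ∃ x : ℝ, 0 ≤ x ∧ greedyU q x = b := by
  classical
  have hq0 : (0:ℝ) < q := by linarith
  have hb' : ∀ n, ∃ k, (∀ j, j < k → b (n+1+j) = quasiGreedyU q 1 j) ∧
      b (n+1+k) < quasiGreedyU q 1 k := hb
  choose K hK1 hK2 using hb'
  set f : ℕ → ℕ → ℝ := fun n i => (b (n+1+i) : ℝ) / q^(i+1) with hf
  have hfnn : ∀ n i, 0 ≤ f n i := fun n i => by positivity
  have B2 : ∀ N n, ∑ i ∈ Finset.range N, f n i ≤ qgSumU q 1 (K n + 1) := by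
    intro N
    induction N using Nat.strong_induction_on with
    | _ N IH =>
      intro n
      by_cases hNk : N ≤ K n
      · have heq : ∑ i ∈ Finset.range N, f n i = qgSumU q 1 N := by
          rw [qgSumU_eq_sum]
          refine Finset.sum_congr rfl fun i hi => ?_
          rw [hf]; simp only
          rw [hK1 n i (lt_of_lt_of_le (Finset.mem_range.mp hi) hNk)]
        rw [heq]
        exact qgSumU_mono hq (by omega : N ≤ K n + 1)
      · push_neg at hNk
        have hp : (0:ℝ) < q^(K n+1) := pow_pos hq0 _
        have hM : N = (K n + 1) + (N - (K n + 1)) := by omega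
        rw [hM, Finset.sum_range_add]
        have hfirst : ∑ i ∈ Finset.range (K n + 1), f n i
            ≤ qgSumU q 1 (K n + 1) - 1/q^(K n + 1) := by
          rw [Finset.sum_range_succ]
          have hpre : ∑ i ∈ Finset.range (K n), f n i = qgSumU q 1 (K n) := by
            rw [qgSumU_eq_sum]
            refine Finset.sum_congr rfl fun i hi => ?_
            rw [hf]; simp only
            rw [hK1 n i (Finset.mem_range.mp hi)]
          have hdig : (b (n+1+K n):ℝ) ≤ (quasiGreedyU q 1 (K n) : ℝ) - 1 := by
            have h2 : b (n+1+K n) + 1 ≤ quasiGreedyU q 1 (K n) := hK2 n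
            have h3 : ((b (n+1+K n):ℝ) + 1) ≤ (quasiGreedyU q 1 (K n):ℝ) := by
              exact_mod_cast h2
            linarith
          have hqg : qgSumU q 1 (K n + 1)
              = qgSumU q 1 (K n) + (quasiGreedyU q 1 (K n):ℝ)/q^(K n + 1) := rfl
          have hfk : f n (K n) = (b (n+1+K n):ℝ)/q^(K n + 1) := rfl
          have hdiv : (b (n+1+K n):ℝ)/q^(K n + 1)
              ≤ ((quasiGreedyU q 1 (K n):ℝ) - 1)/q^(K n + 1) := by gcongr
          have hsub : ((quasiGreedyU q 1 (K n):ℝ) - 1)/q^(K n + 1)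
              = (quasiGreedyU q 1 (K n):ℝ)/q^(K n + 1) - 1/q^(K n + 1) := sub_div _ _ _
          rw [hpre, hfk, hqg]
          linarith
        have hre : ∀ i, f n ((K n + 1)+i) = (1/q^(K n + 1)) * f (n + K n + 1) i := by
          intro i
          rw [hf]; simp only
          rw [show n+1+(K n + 1+i) = (n + K n + 1)+1+i from by omega]
          rw [show ((K n + 1)+i)+1 = (K n + 1)+(i+1) from by omega, pow_add]
          rw [one_div, inv_mul_eq_div, div_div, mul_comm (q^(i+1))]
        have hsecond : ∑ i ∈ Finset.range (N-(K n + 1)), f n ((K n + 1)+i)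
            ≤ 1/q^(K n + 1) := by
          calc ∑ i ∈ Finset.range (N-(K n + 1)), f n ((K n + 1)+i)
              = ∑ i ∈ Finset.range (N-(K n + 1)), (1/q^(K n + 1)) * f (n + K n + 1) i :=
                Finset.sum_congr rfl fun i _ => hre i
            _ = (1/q^(K n + 1)) * ∑ i ∈ Finset.range (N-(K n + 1)), f (n + K n + 1) i :=
                (Finset.mul_sum _ _ _).symm
            _ ≤ (1/q^(K n + 1)) * 1 := by
                apply mul_le_mul_of_nonneg_left _ (by positivity)
                exact (IH (N - (K n + 1)) (by omega) (n + K n + 1)).trans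
                  (qgSumU_lt hq one_pos _).le
            _ = 1/q^(K n + 1) := mul_one _
        linarith [add_le_add hfirst hsecond]
  have hsn : ∀ n, Summable (f n) := fun n =>
    summable_of_sum_range_le (hfnn n) (fun N => B2 N n)
  have ht_le : ∀ n, ∑' i, f n i ≤ qgSumU q 1 (K n + 1) := fun n =>
    Summable.tsum_le_of_sum_range_le (hsn n) (fun N => B2 N n)
  have ht_lt1 : ∀ n, ∑' i, f n i < 1 := fun n =>
    lt_of_le_of_lt (ht_le n) (qgSumU_lt hq one_pos _)
  have ht_nn : ∀ n, 0 ≤ ∑' i, f n i := fun n => tsum_nonneg (hfnn n)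
  set g : ℕ → ℝ := fun i => (b i : ℝ)/q^(i+1) with hg
  have hgnn : ∀ i, 0 ≤ g i := fun i => by positivity
  have hg_shift : ∀ n i, g (i + (n+1)) = (1/q^(n+1)) * f n i := by
    intro n i
    rw [hg, hf]; simp only
    rw [show i + (n+1) = n+1+i from by omega]
    rw [show (n+1+i)+1 = (n+1)+(i+1) from by omega, pow_add]
    rw [one_div, inv_mul_eq_div, div_div, mul_comm (q^(i+1))]
  have hgsum : Summable g := by
    apply summable_of_sum_range_le hgnn (c := g 0 + 1)
    intro N
    cases N with
    | zero => simp; positivity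
    | succ M =>
      rw [Finset.sum_range_succ']
      have h0 : ∀ i : ℕ, g (i+1) = (1/q^(0+1)) * f 0 i := fun i => hg_shift 0 i
      have hc : ∑ i ∈ Finset.range M, g (i+1)
          = (1/q^(0+1)) * ∑ i ∈ Finset.range M, f 0 i := by
        rw [Finset.sum_congr rfl fun i _ => h0 i, ← Finset.mul_sum]
      have hb1 : ∑ i ∈ Finset.range M, f 0 i ≤ 1 :=
        (B2 M 0).trans (qgSumU_lt hq one_pos _).le
      have hp : (0:ℝ) < q^(0+1) := pow_pos hq0 _
      have h1q : (1:ℝ)/q^(0+1) ≤ 1 := by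
        rw [div_le_one hp]; simpa using hq.le
      have hnn : (0:ℝ) ≤ ∑ i ∈ Finset.range M, f 0 i :=
        Finset.sum_nonneg fun i _ => hfnn 0 i
      have : (1/q^(0+1)) * ∑ i ∈ Finset.range M, f 0 i ≤ 1 := by
        calc (1/q^(0+1)) * ∑ i ∈ Finset.range M, f 0 i ≤ 1 * 1 := by
              apply mul_le_mul h1q hb1 hnn (by norm_num)
          _ = 1 := mul_one 1
      rw [hc]
      linarith
  set x := ∑' i, g i with hx
  have hx0 : 0 ≤ x := tsum_nonneg hgnn
  have htail : ∀ n, x - ∑ i ∈ Finset.range n, g i = ∑' i, g (i + n) := by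
    intro n; have := hgsum.sum_add_tsum_nat_add n; rw [hx]; linarith
  have htail_succ : ∀ n, ∑' i, g (i + (n+1)) = (1/q^(n+1)) * ∑' i, f n i := by
    intro n
    calc ∑' i, g (i + (n+1)) = ∑' i, (1/q^(n+1)) * f n i :=
          tsum_congr (fun i => hg_shift n i)
      _ = (1/q^(n+1)) * ∑' i, f n i := tsum_mul_left
  have hsplit : ∀ n, ∑' i, g (i + n) = g n + (1/q^(n+1)) * ∑' i, f n i := by
    intro n
    have hsum_n : Summable (fun i => g (i + n)) := (summable_nat_add_iff n).2 hgsum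
    have h0 := hsum_n.tsum_eq_zero_add
    rw [h0]
    congr 1
    · show g (0 + n) = g n
      norm_num
    · rw [← htail_succ n]
      exact tsum_congr fun i => by rw [show i+1+n = i+(n+1) from by omega]
  have D : ∀ n, gDigitU q x (∑ i ∈ Finset.range n, g i) n = b n := by
    intro n
    have hp : (0:ℝ) < q^(n+1) := pow_pos hq0 _
    have hxs : x - ∑ i ∈ Finset.range n, g i = g n + (1/q^(n+1)) * ∑' i, f n i := by
      rw [htail n, hsplit n]
    have hgn : g n = (b n:ℝ)/q^(n+1) := rfl
    have hbn : ∑ i ∈ Finset.range n, g i + (b n:ℝ)/q^(n+1) ≤ x := by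
      have hnn2 : (0:ℝ) ≤ (1/q^(n+1)) * ∑' i, f n i :=
        mul_nonneg (by positivity) (ht_nn n)
      linarith [hxs]
    have hub : ∀ m : ℕ, ∑ i ∈ Finset.range n, g i + (m:ℝ)/q^(n+1) ≤ x → m ≤ b n := by
      intro m hm
      have h1 : (1/q^(n+1)) * ∑' i, f n i < 1/q^(n+1) := by
        calc (1/q^(n+1)) * ∑' i, f n i < (1/q^(n+1)) * 1 :=
              mul_lt_mul_of_pos_left (ht_lt1 n) (by positivity)
          _ = 1/q^(n+1) := mul_one _
      have h2 : (m:ℝ)/q^(n+1) < (b n:ℝ)/q^(n+1) + 1/q^(n+1) := by linarith [hxs]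
      have h3 : (m:ℝ)/q^(n+1) < ((b n:ℝ)+1)/q^(n+1) := by
        rw [add_div]; exact h2
      have h4 : (m:ℝ) < (b n:ℝ) + 1 := by
        have := (div_lt_div_iff_of_pos_right hp).mp h3
        exact this
      have : m < b n + 1 := by exact_mod_cast h4
      omega
    show sSup {m : ℕ | ∑ i ∈ Finset.range n, g i + (m:ℝ)/q^(n+1) ≤ x} = b n
    apply le_antisymm
    · exact csSup_le ⟨b n, hbn⟩ (fun m hm => hub m hm)
    · exact le_csSup ⟨b n, fun m hm => hub m hm⟩ hbn
  have H : ∀ n, gSumU q x n = ∑ i ∈ Finset.range n, g i := by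
    intro n
    induction n with
    | zero => simp [gSumU]
    | succ n ih =>
      show gSumU q x n + (gDigitU q x (gSumU q x n) n : ℝ)/q^(n+1)
          = ∑ i ∈ Finset.range (n+1), g i
      rw [ih, D n, Finset.sum_range_succ]
  refine ⟨x, hx0, funext fun n => ?_⟩
  show gDigitU q x (gSumU q x n) n = b n
  rw [H n]
  exact D n


/-- Theorem 3.6 (b): for fixed `q > 1`, the map `x ↦ (b_i)`, the greedy expansion of `x`
with unbounded digits, is a strictly increasing one-to-one correspondence between `[0, ∞)`
and the set of all sequences of nonnegative integers satisfying `b_{n+1}b_{n+2}… < α_1α_2…`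
for all `n ≥ 1`, where `(α_i)` is the quasi-greedy expansion of `1`. -/
theorem greedyU_bijection (q : ℝ) (hq : 1 < q) :
    (∀ x x' : ℝ, 0 ≤ x → x < x' → LexLt (greedyU q x) (greedyU q x')) ∧
    Set.BijOn (fun x : ℝ => greedyU q x) (Set.Ici 0)
      {b : ℕ → ℕ | ∀ n, LexLt (fun i => b (n + 1 + i)) (quasiGreedyU q 1)} := by
  constructor
  · intro x x' hx hxx
    exact greedyU_strictMono hq hx hxx
  · refine ⟨?_, ?_, ?_⟩
    · intro x hx
      simp only [Set.mem_setOf_eq]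
      intro n
      have hx0 : (0:ℝ) ≤ x := hx
      have hA : (0:ℝ) < q^(n+1) := pow_pos (by linarith) _
      set y := q^(n+1) * (x - gSumU q x (n+1)) with hy
      have hy0 : 0 ≤ y := mul_nonneg hA.le (by linarith [gSumU_le hq hx0 (n+1)])
      have hy1 : y < 1 := by
        have h1 := lt_gSumU_succ hq hx0 n
        have h2 : x - gSumU q x (n+1) < 1/q^(n+1) := by linarith
        calc y < q^(n+1) * (1/q^(n+1)) := mul_lt_mul_of_pos_left h2 hA
          _ = 1 := by field_simp
      have hsh := greedyU_shift (x := x) hq n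
      have hfe : (fun i => greedyU q x (n+1+i)) = greedyU q y := by
        funext i; exact ((hsh i).2).symm
      rw [hfe]
      exact greedyU_lexLt_alpha hq hy0 hy1
    · intro x hx x' hx' h
      have h' : greedyU q x = greedyU q x' := h
      by_contra hne
      rcases lt_or_gt_of_ne hne with hlt | hgt
      · obtain ⟨n, _, hn⟩ := greedyU_strictMono hq hx hlt
        rw [h'] at hn
        exact lt_irrefl _ hn
      · obtain ⟨n, _, hn⟩ := greedyU_strictMono hq hx' hgt
        rw [h'] at hn
        exact lt_irrefl _ hn
    · intro b hb
      obtain ⟨x, hx0, hxb⟩ := greedyU_surj hq b hb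
      exact ⟨x, hx0, hxb⟩
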